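/- arXiv:1707.05527 — 4 statements merged into one kernel-verified Lean document; each statement's English description precedes it below -/
import Mathlib

section
/- Let d ≥ 2 and let F ⊆ ℝ^d be a convex set contained in the closed unit ball B(0,1) and contained in the nonnegative orthant. Then F is contained in the closed ball of radius √(1 − 1/d) centered at s = (1/d, …, 1/d). -/
theorem stmt_5 (d : ℕ) (hd : 2 ≤ d) (F : Set (EuclideanSpace ℝ (Fin d)))
    (hF : Convex ℝ F)
    (hball : F ⊆ Metric.closedBall (0 : EuclideanSpace ℝ (Fin d)) 1)
    (horth : ∀ x ∈ F, ∀ k, 0 ≤ x k)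
    (s : EuclideanSpace ℝ (Fin d)) (hs : ∀ k, s k = 1 / d) :
    F ⊆ Metric.closedBall s (Real.sqrt (1 - 1 / d)) := by
  intro x hx
  have hD : (2 : ℝ) ≤ (d : ℝ) := by exact_mod_cast hd
  have hDpos : (0 : ℝ) < d := by linarith
  have hxk := horth x hx
  -- norm bound
  have hb := hball hx
  rw [Metric.mem_closedBall] at hb ⊢
  have hdist : dist x (0 : EuclideanSpace ℝ (Fin d)) = Real.sqrt (∑ i, (x i)^2) := by
    rw [EuclideanSpace.dist_eq]
    congr 1
    apply Finset.sum_congr rfl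
    intro i _
    simp
  have hn1 : ∑ i, (x i)^2 ≤ 1 := by
    rw [hdist] at hb
    have := Real.sqrt_le_sqrt (le_of_eq (Real.sqrt_one).symm) -- dummy
    nlinarith [Real.sq_sqrt (Finset.sum_nonneg (fun i _ => sq_nonneg (x i)) :
      (0:ℝ) ≤ ∑ i, (x i)^2), Real.sqrt_nonneg (∑ i, (x i)^2)]
  set t : ℝ := ∑ i, x i with ht
  set n : ℝ := ∑ i, (x i)^2 with hn
  have htnonneg : 0 ≤ t := Finset.sum_nonneg (fun i _ => hxk i)
  have hnt : n ≤ t^2 := by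
    have : ∀ i ∈ Finset.univ, (x i)^2 ≤ x i * t := by
      intro i _
      have hle : x i ≤ t := Finset.single_le_sum (fun j _ => hxk j) (Finset.mem_univ i)
      nlinarith [hxk i]
    calc n ≤ ∑ i, x i * t := Finset.sum_le_sum this
      _ = t * t := by rw [← Finset.sum_mul]
      _ = t^2 := by ring
  -- compute dist x s
  have hsum : ∑ i, (x i - s i)^2 = n - (2/d) * t + 1/d := by
    have : ∀ i ∈ Finset.univ, (x i - s i)^2 = (x i)^2 - (2/d) * x i + 1/d^2 := by
      intro i _
      rw [hs i]
      ring
    rw [Finset.sum_congr rfl this]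
    rw [Finset.sum_add_distrib, Finset.sum_sub_distrib, ← Finset.mul_sum]
    simp only [Finset.sum_const, Finset.card_univ, Fintype.card_fin, nsmul_eq_mul]
    have hdne : (d:ℝ) ≠ 0 := ne_of_gt hDpos
    field_simp
    ring
  have key : ∑ i, (x i - s i)^2 ≤ 1 - 1/d := by
    rw [hsum]
    have h3 : (2:ℝ)/d = 2 * (1/d) := by ring
    rcases le_total t 1 with h1 | h1
    · have : n ≤ t := by nlinarith
      have h2 : 0 ≤ 1 - 2/(d:ℝ) := by
        rw [sub_nonneg, div_le_one hDpos]; linarith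
      nlinarith [mul_nonneg h2 (sub_nonneg.mpr h1)]
    · have h2 : 0 ≤ 2/(d:ℝ) := by positivity
      nlinarith [mul_nonneg h2 (sub_nonneg.mpr h1)]
  rw [EuclideanSpace.dist_eq]
  have : ∑ i, (x i - s i)^2 = ∑ i, dist (x i) (s i)^2 := by
    apply Finset.sum_congr rfl; intro i _; rw [Real.dist_eq, sq_abs]
  rw [← this]
  exact Real.sqrt_le_sqrt key
end

section
/- Let F ⊆ ℝ^d be a nonempty compact convex set and suppose B(v, r) is the (unique) minimum-volume closed Euclidean ball containing F. Then v ∈ F. -/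
/-!
If the centre `v` of a smallest ball containing `F` were outside `F`, let `p` be its nearest point
in `F`. The angle at `p` between `v` and any `x ∈ F` is obtuse, so
`‖x - p‖² ≤ ‖x - v‖² - ‖v - p‖² ≤ r² - ‖v - p‖²`, and the ball around `p` of radius
`√(r² - ‖v - p‖²) < r` still contains `F`.
-/

open Metric

variable {E : Type*} [NormedAddCommGroup E] [InnerProductSpace ℝ E]

theorem norm_sub_sq_add_norm_sub_sq_le_of_inner_le_zero {x p v : E}
    (h : inner ℝ (v - p) (x - p) ≤ 0) : ‖x - p‖ ^ 2 + ‖v - p‖ ^ 2 ≤ ‖x - v‖ ^ 2 := by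
  have hsplit : ‖x - v‖ ^ 2 = ‖x - p‖ ^ 2 - 2 * inner ℝ (x - p) (v - p) + ‖v - p‖ ^ 2 := by
    rw [← norm_sub_sq_real, sub_sub_sub_cancel_right]
  rw [hsplit, real_inner_comm]
  linarith

theorem exists_closedBall_radius_lt_of_notMem {K : Set E} (hne : K.Nonempty)
    (hcomplete : IsComplete K) (hconv : Convex ℝ K) {v : E} {r : ℝ} (hv : v ∉ K)
    (hsub : K ⊆ closedBall v r) : ∃ p r', r' < r ∧ K ⊆ closedBall p r' := by
  obtain ⟨p, hpK, hp⟩ := exists_norm_eq_iInf_of_complete_convex hne hcomplete hconv v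
  rw [norm_eq_iInf_iff_real_inner_le_zero hconv hpK] at hp
  have hδ : 0 < ‖v - p‖ := norm_pos_iff.2 (sub_ne_zero.2 fun hvp => hv (hvp ▸ hpK))
  have hδr : ‖v - p‖ ≤ r := by simpa [dist_eq_norm, norm_sub_rev] using hsub hpK
  refine ⟨p, √(r ^ 2 - ‖v - p‖ ^ 2), ?_, fun x hx => ?_⟩
  · rw [Real.sqrt_lt' (hδ.trans_le hδr)]
    nlinarith
  · have hxv : ‖x - v‖ ≤ r := by simpa [dist_eq_norm] using hsub hx
    have hobtuse := norm_sub_sq_add_norm_sub_sq_le_of_inner_le_zero (hp x hx)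
    rw [mem_closedBall, dist_eq_norm, ← abs_norm]
    apply Real.abs_le_sqrt
    nlinarith [norm_nonneg (x - v)]

theorem stmt_10_general (d : ℕ) (F : Set (EuclideanSpace ℝ (Fin d)))
    (hne : F.Nonempty) (hcpt : IsCompact F) (hconv : Convex ℝ F)
    (v : EuclideanSpace ℝ (Fin d)) (r : ℝ)
    (hsub : F ⊆ Metric.closedBall v r)
    (hmin : ∀ (v' : EuclideanSpace ℝ (Fin d)) (r' : ℝ),
      F ⊆ Metric.closedBall v' r' → r ≤ r') :
    v ∈ F := by
  by_contra hv
  obtain ⟨p, r', hr', hsub'⟩ :=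
    exists_closedBall_radius_lt_of_notMem hne hcpt.isComplete hconv hv hsub
  exact (hmin p r' hsub').not_gt hr'

theorem stmt_10 (d : ℕ) (F : Set (EuclideanSpace ℝ (Fin d)))
    (hne : F.Nonempty) (hcpt : IsCompact F) (hconv : Convex ℝ F)
    (v : EuclideanSpace ℝ (Fin d)) (r : ℝ) (hr : 0 ≤ r)
    (hsub : F ⊆ Metric.closedBall v r)
    (hmin : ∀ (v' : EuclideanSpace ℝ (Fin d)) (r' : ℝ),
      F ⊆ Metric.closedBall v' r' → r ≤ r') :
    v ∈ F :=
  stmt_10_general d F hne hcpt hconv v r hsub hmin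
end

section
/- For 0 < α < 1 and every i ≥ 0, the point (0,0) belongs to the halfplanes R_i = {(x,y) : 2y ≤ (α^{2i} − α^{2i+1})x + (α^{2i} + α^{2i+1})} and L_i = {(x,y) : 2y ≤ (α^{2i+2} − α^{2i+1})x + (α^{2i+2} + α^{2i+1})}, and moreover R_{i+1} ∩ S ⊆ L_i ∩ S ⊆ R_i ∩ S where S = {(x,y) : −1 ≤ x ≤ 1, y ≥ 0}. -/
theorem stmt_17 (α : ℝ) (hα0 : 0 < α) (hα1 : α < 1)
    (R L : ℕ → Set (ℝ × ℝ))
    (hR : ∀ i, R i = {p : ℝ × ℝ |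
      2 * p.2 ≤ (α ^ (2 * i) - α ^ (2 * i + 1)) * p.1 + (α ^ (2 * i) + α ^ (2 * i + 1))})
    (hL : ∀ i, L i = {p : ℝ × ℝ |
      2 * p.2 ≤ (α ^ (2 * i + 2) - α ^ (2 * i + 1)) * p.1 + (α ^ (2 * i + 2) + α ^ (2 * i + 1))})
    (S : Set (ℝ × ℝ)) (hS : S = {p : ℝ × ℝ | -1 ≤ p.1 ∧ p.1 ≤ 1 ∧ 0 ≤ p.2}) :
    ∀ i : ℕ, ((0, 0) : ℝ × ℝ) ∈ R i ∧ ((0, 0) : ℝ × ℝ) ∈ L i ∧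
      R (i + 1) ∩ S ⊆ L i ∩ S ∧ L i ∩ S ⊆ R i ∩ S := by
  intro i
  have ha : ∀ n : ℕ, 0 < α ^ n := fun n => pow_pos hα0 n
  have refine_all : True := trivial
  refine ⟨?_, ?_, ?_, ?_⟩
  · rw [hR]
    have := ha (2 * i); have := ha (2 * i + 1)
    simp only [Set.mem_setOf_eq]
    nlinarith
  · rw [hL]
    have := ha (2 * i + 2); have := ha (2 * i + 1)
    simp only [Set.mem_setOf_eq]
    nlinarith
  · rintro ⟨x, y⟩ ⟨hp, hs⟩
    refine ⟨?_, hs⟩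
    rw [hR] at hp; rw [hL]; rw [hS] at hs
    simp only [Set.mem_setOf_eq] at *
    obtain ⟨hx1, hx2, hy⟩ := hs
    have h1 : α ^ (2 * i + 3) ≤ α ^ (2 * i + 1) :=
      pow_le_pow_of_le_one hα0.le hα1.le (by omega)
    have e1 : 2 * (i + 1) = 2 * i + 2 := by ring
    have e2 : 2 * (i + 1) + 1 = 2 * i + 3 := by ring
    rw [e2, e1] at hp
    
    nlinarith [mul_nonneg (sub_nonneg.2 h1) (sub_nonneg.2 hx2)]
  · rintro ⟨x, y⟩ ⟨hp, hs⟩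
    refine ⟨?_, hs⟩
    rw [hL] at hp; rw [hR]; rw [hS] at hs
    simp only [Set.mem_setOf_eq] at *
    obtain ⟨hx1, hx2, hy⟩ := hs
    have h1 : α ^ (2 * i + 2) ≤ α ^ (2 * i) :=
      pow_le_pow_of_le_one hα0.le hα1.le (by omega)
    nlinarith [mul_nonneg (sub_nonneg.2 h1) (by linarith : (0:ℝ) ≤ x + 1)]
end

section
/- The smallest-volume ellipse containing an equilateral triangle in ℝ² is its circumscribed circle; in particular, the center of the minimum-volume enclosing ellipse of an equilateral triangle is its circumcenter. -/
/-!
Write an ellipse as `L '' closedBall 0 1` and pull the vertices back to `a = L⁻¹ A`, `b`, `c` in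
the unit disk. Areas scale by `|det L|`, and a triangle in the unit disk has squared doubled area
`‖b - a‖²‖c - a‖² - ⟪b - a, c - a⟫² ≤ 27/4`: by Weitzenböck's inequality it is at most a twelfth
of the square of the sum of the squared sides, and that sum equals
`3 (‖a‖² + ‖b‖² + ‖c‖²) - ‖a + b + c‖² ≤ 9`. The equilateral triangle of circumradius `R` has
squared doubled area `27 R⁴ / 4`, so `|det L| ≥ R²`, and the area of the ellipse is at least `π R²`.
In the equality case `a`, `b`, `c` lie on the unit circle with `a + b + c = 0`; hence `L 0` is the
centroid of `A B C`, which in the plane is the circumcenter, and the linear part of `L` multiplies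
norms by `R`, so the ellipse is the circumcircle.
-/

open MeasureTheory

/-- An ellipse in the Euclidean plane: the image of the closed unit disk
under an invertible affine map. -/
def IsEllipsoid (S : Set (EuclideanSpace ℝ (Fin 2))) : Prop :=
  ∃ L : EuclideanSpace ℝ (Fin 2) ≃ᵃ[ℝ] EuclideanSpace ℝ (Fin 2),
    S = L '' Metric.closedBall 0 1

open Metric Module RealInnerProductSpace

theorem AffineMap.apply_eq_linear_add {k V W : Type*} [Ring k] [AddCommGroup V] [Module k V]
    [AddCommGroup W] [Module k W] (f : V →ᵃ[k] W) (x : V) : f x = f.linear x + f 0 :=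
  congrFun f.decomp x

theorem pos_of_dist_eq_of_ne {X : Type*} [MetricSpace X] {A B O : X} {R : ℝ} (hAB : A ≠ B)
    (hOA : dist O A = R) (hOB : dist O B = R) : 0 < R := by
  rcases (hOA ▸ dist_nonneg : 0 ≤ R).lt_or_eq with hR | rfl
  · exact hR
  · exact absurd ((dist_eq_zero.mp hOA).symm.trans (dist_eq_zero.mp hOB)) hAB

theorem image_closedBall_eq_of_dist_eq {X Y : Type*} [SeminormedAddGroup X] [PseudoMetricSpace Y]
    (L : X ≃ Y) {O : Y} {R : ℝ} (hR : 0 < R) (h : ∀ x, dist (L x) O = R * ‖x‖) :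
    L '' closedBall 0 1 = closedBall O R := by
  ext y
  obtain ⟨x, rfl⟩ := L.surjective y
  rw [L.injective.mem_set_image, mem_closedBall_zero_iff, mem_closedBall, h,
    mul_le_iff_le_one_right hR]

variable {V : Type*} [NormedAddCommGroup V]

theorem norm_sub_eq_dist_of_equilateral {A B C : V} (h₁ : dist A B = dist B C)
    (h₂ : dist B C = dist C A) : ‖B - A‖ = dist A B ∧ ‖C - A‖ = dist A B ∧ ‖B - C‖ = dist A B := by
  refine ⟨(dist_eq_norm' A B).symm, ?_, ?_⟩
  · rw [← dist_eq_norm', dist_comm, ← h₂, ← h₁]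
  · rw [← dist_eq_norm', dist_comm, h₁]

theorem addHaar_image_affineEquiv [NormedSpace ℝ V] [FiniteDimensional ℝ V] [MeasurableSpace V]
    [BorelSpace V] (μ : Measure V) [μ.IsAddHaarMeasure] (L : V ≃ᵃ[ℝ] V) (s : Set V) :
    μ (L '' s) = ENNReal.ofReal |LinearMap.det (L.linear : V →ₗ[ℝ] V)| * μ s := by
  have hL : ⇑L = (· + L 0) ∘ L.linear := (L : V →ᵃ[ℝ] V).decomp
  rw [hL, Set.image_comp, Set.image_add_right, measure_preimage_add_right]
  exact Measure.addHaar_image_linearMap μ _ s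

section InnerProductSpace

variable [InnerProductSpace ℝ V]

/-- The Gram determinant of `u` and `v`, the squared area of the parallelogram they span. -/
def gram (u v : V) : ℝ := ‖u‖ ^ 2 * ‖v‖ ^ 2 - ⟪u, v⟫ ^ 2

theorem norm_sub_sq_add_norm_sub_sq_add_norm_sub_sq (a b c : V) :
    ‖b - c‖ ^ 2 + ‖c - a‖ ^ 2 + ‖a - b‖ ^ 2 + ‖a + b + c‖ ^ 2
      = 3 * (‖a‖ ^ 2 + ‖b‖ ^ 2 + ‖c‖ ^ 2) := by
  simp only [norm_sub_sq_real, norm_add_sq_real, inner_add_left, real_inner_comm a c]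
  ring

/-- Weitzenböck's inequality. -/
theorem twelve_mul_gram_sub_le (a b c : V) :
    12 * gram (b - a) (c - a) ≤ (‖b - c‖ ^ 2 + ‖c - a‖ ^ 2 + ‖a - b‖ ^ 2) ^ 2 := by
  have hbc : ‖b - c‖ ^ 2 = ‖b - a‖ ^ 2 - 2 * ⟪b - a, c - a⟫ + ‖c - a‖ ^ 2 := by
    rw [← norm_sub_sq_real, sub_sub_sub_cancel_right]
  rw [gram, hbc, norm_sub_rev a b]
  nlinarith [sq_nonneg (‖b - a‖ ^ 2 - ‖c - a‖ ^ 2), sq_nonneg (‖b - a‖ ^ 2 - 2 * ⟪b - a, c - a⟫),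
    sq_nonneg (‖c - a‖ ^ 2 - 2 * ⟪b - a, c - a⟫)]

theorem four_mul_gram_sub_le {a b c : V} (ha : ‖a‖ ≤ 1) (hb : ‖b‖ ≤ 1) (hc : ‖c‖ ≤ 1) :
    4 * gram (b - a) (c - a) ≤ 27 := by
  have hsum := norm_sub_sq_add_norm_sub_sq_add_norm_sub_sq a b c
  have hweit := twelve_mul_gram_sub_le a b c
  have h9 : ‖b - c‖ ^ 2 + ‖c - a‖ ^ 2 + ‖a - b‖ ^ 2 ≤ 9 := by
    nlinarith [norm_nonneg a, norm_nonneg b, norm_nonneg c, sq_nonneg ‖a + b + c‖]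
  nlinarith [sq_nonneg ‖b - c‖, sq_nonneg ‖c - a‖, sq_nonneg ‖a - b‖]

theorem add_add_eq_zero_of_four_mul_gram_sub_eq {a b c : V} (ha : ‖a‖ ≤ 1) (hb : ‖b‖ ≤ 1)
    (hc : ‖c‖ ≤ 1) (h : 4 * gram (b - a) (c - a) = 27) :
    a + b + c = 0 ∧ ‖a‖ = 1 ∧ ‖b‖ = 1 ∧ ‖c‖ = 1 := by
  have hsum := norm_sub_sq_add_norm_sub_sq_add_norm_sub_sq a b c
  have hweit := twelve_mul_gram_sub_le a b c
  have h9 : 9 ≤ ‖b - c‖ ^ 2 + ‖c - a‖ ^ 2 + ‖a - b‖ ^ 2 := by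
    nlinarith [sq_nonneg ‖b - c‖, sq_nonneg ‖c - a‖, sq_nonneg ‖a - b‖]
  have ha' : ‖a‖ ^ 2 ≤ 1 := pow_le_one₀ (norm_nonneg a) ha
  have hb' : ‖b‖ ^ 2 ≤ 1 := pow_le_one₀ (norm_nonneg b) hb
  have hc' : ‖c‖ ^ 2 ≤ 1 := pow_le_one₀ (norm_nonneg c) hc
  have hS : ‖a + b + c‖ ^ 2 = 0 := by nlinarith [sq_nonneg ‖a + b + c‖]
  refine ⟨by simpa using hS, ?_, ?_, ?_⟩ <;> nlinarith [norm_nonneg a, norm_nonneg b, norm_nonneg c]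

section Equilateral

variable {A B C : V} (h₁ : dist A B = dist B C) (h₂ : dist B C = dist C A)
include h₁ h₂

theorem two_mul_inner_sub_sub_of_equilateral : 2 * ⟪B - A, C - A⟫ = dist A B ^ 2 := by
  obtain ⟨hBA, hCA, hBC⟩ := norm_sub_eq_dist_of_equilateral h₁ h₂
  have h := norm_sub_sq_real (B - A) (C - A)
  rw [sub_sub_sub_cancel_right, hBA, hCA, hBC] at h
  linarith

theorem four_mul_gram_sub_of_equilateral : 4 * gram (B - A) (C - A) = 3 * dist A B ^ 4 := by
  obtain ⟨hBA, hCA, -⟩ := norm_sub_eq_dist_of_equilateral h₁ h₂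
  have h := two_mul_inner_sub_sub_of_equilateral h₁ h₂
  rw [gram, hBA, hCA]
  linear_combination (-(dist A B ^ 2) - 2 * ⟪B - A, C - A⟫) * h

theorem three_mul_dist_centroid_sq_of_equilateral :
    3 * dist ((3 : ℝ)⁻¹ • (A + B + C)) A ^ 2 = dist A B ^ 2 := by
  obtain ⟨hBA, hCA, -⟩ := norm_sub_eq_dist_of_equilateral h₁ h₂
  have h := two_mul_inner_sub_sub_of_equilateral h₁ h₂
  have hG : (3 : ℝ)⁻¹ • (A + B + C) - A = (3 : ℝ)⁻¹ • ((B - A) + (C - A)) := by module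
  rw [dist_eq_norm, hG, norm_smul, mul_pow, norm_add_sq_real, hBA, hCA]
  norm_num
  linear_combination h / 3

end Equilateral

theorem norm_map_sq_of_span_pair {W : Type*} [NormedAddCommGroup W] [InnerProductSpace ℝ W]
    {M : V →ₗ[ℝ] W} {a b : V} (hspan : Submodule.span ℝ {a, b} = ⊤) {k : ℝ}
    (ha : ‖M a‖ ^ 2 = k * ‖a‖ ^ 2) (hb : ‖M b‖ ^ 2 = k * ‖b‖ ^ 2)
    (hab : ‖M (a + b)‖ ^ 2 = k * ‖a + b‖ ^ 2) (x : V) : ‖M x‖ ^ 2 = k * ‖x‖ ^ 2 := by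
  obtain ⟨s, t, rfl⟩ := Submodule.mem_span_pair.mp (hspan ▸ Submodule.mem_top : x ∈ _)
  rw [map_add] at hab
  simp only [map_add, map_smul, norm_add_sq_real, norm_smul, inner_smul_left, inner_smul_right,
    mul_pow, Real.norm_eq_abs, sq_abs, conj_trivial] at hab ⊢
  linear_combination s ^ 2 * ha + t ^ 2 * hb + s * t * (hab - ha - hb)

section TwoDim

variable [Fact (finrank ℝ V = 2)]

attribute [local instance] FiniteDimensional.of_fact_finrank_eq_two

namespace Orientation

variable (o : Orientation ℝ V (Fin 2))

theorem areaForm_sq (u v : V) : o.areaForm u v ^ 2 = gram u v := by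
  rw [gram, ← o.inner_sq_add_areaForm_sq]; ring

theorem areaForm_ne_zero_of_gram_ne_zero {u v : V} (h : gram u v ≠ 0) : o.areaForm u v ≠ 0 :=
  ne_zero_pow two_ne_zero (o.areaForm_sq u v ▸ h)

theorem areaForm_map_linearMap (M : V →ₗ[ℝ] V) (u v : V) :
    o.areaForm (M u) (M v) = LinearMap.det M * o.areaForm u v := by
  have hb := o.finOrthonormalBasis_orientation two_pos Fact.out
  simp only [areaForm_to_volumeForm, o.volumeForm_robust _ hb]
  rw [← Basis.det_comp]
  congr 1
  ext i; fin_cases i <;> rfl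

end Orientation

theorem nonempty_orientation_fin_two : Nonempty (Orientation ℝ V (Fin 2)) :=
  ⟨(finBasisOfFinrankEq ℝ V Fact.out).orientation⟩

theorem gram_map (M : V →ₗ[ℝ] V) (u v : V) :
    gram (M u) (M v) = LinearMap.det M ^ 2 * gram u v := by
  obtain ⟨o⟩ := nonempty_orientation_fin_two (V := V)
  rw [← o.areaForm_sq, ← o.areaForm_sq, o.areaForm_map_linearMap, mul_pow]

theorem gram_sub_map (L : V →ᵃ[ℝ] V) (a b c : V) :
    gram (L b - L a) (L c - L a) = LinearMap.det L.linear ^ 2 * gram (b - a) (c - a) := by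
  rw [← gram_map, map_sub, map_sub, L.apply_eq_linear_add a, L.apply_eq_linear_add b,
    L.apply_eq_linear_add c, add_sub_add_right_eq_sub, add_sub_add_right_eq_sub]

theorem eq_zero_of_inner_eq_zero_of_gram_ne_zero {w u v : V} (hu : ⟪w, u⟫ = 0) (hv : ⟪w, v⟫ = 0)
    (h : gram u v ≠ 0) : w = 0 := by
  obtain ⟨o⟩ := nonempty_orientation_fin_two (V := V)
  have key := o.inner_mul_areaForm_sub w u v
  rw [hu, hv, zero_mul, mul_zero, sub_zero, eq_comm] at key
  simpa [o.areaForm_ne_zero_of_gram_ne_zero h] using key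

theorem span_pair_eq_top_of_gram_ne_zero {u v : V} (h : gram u v ≠ 0) :
    Submodule.span ℝ {u, v} = ⊤ := by
  obtain ⟨o⟩ := nonempty_orientation_fin_two (V := V)
  have hω := o.areaForm_ne_zero_of_gram_ne_zero h
  have hli : LinearIndependent ℝ ![u, v] := by
    refine LinearIndependent.pair_iff.mpr fun s t hst => ?_
    have hu := congrArg (o.areaForm u) hst
    have hv := congrArg (fun x => o.areaForm x v) hst
    simp only [map_add, map_smul, LinearMap.add_apply, LinearMap.smul_apply, smul_eq_mul,
      o.areaForm_apply_self, map_zero, LinearMap.zero_apply] at hu hv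
    exact ⟨by simpa [hω] using hv, by simpa [hω] using hu⟩
  have := hli.span_eq_top_of_card_eq_finrank' (by simp [Fact.out (p := finrank ℝ V = 2)])
  simpa [Matrix.range_cons, Set.pair_comm] using this

/-- `O` and the centroid both lie on the perpendicular bisectors of `AB` and `AC`, which in the
plane meet in a single point. -/
theorem eq_centroid_of_equilateral {A B C O : V} (hAB : A ≠ B) (h₁ : dist A B = dist B C)
    (h₂ : dist B C = dist C A) (hOB : dist O A = dist O B) (hOC : dist O A = dist O C) :
    O = (3 : ℝ)⁻¹ • (A + B + C) := by
  have hGA := three_mul_dist_centroid_sq_of_equilateral h₁ h₂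
  have hGB := three_mul_dist_centroid_sq_of_equilateral h₂ (h₁.trans h₂).symm
  have hGC := three_mul_dist_centroid_sq_of_equilateral (h₁.trans h₂).symm h₁
  rw [← add_rotate, ← h₁] at hGB
  rw [add_rotate C, ← h₂, ← h₁] at hGC
  set G := (3 : ℝ)⁻¹ • (A + B + C)
  have hGB' : dist A G = dist B G := by
    rw [dist_comm A, dist_comm B]
    exact (pow_left_inj₀ dist_nonneg dist_nonneg two_ne_zero).mp (by linarith)
  have hGC' : dist A G = dist C G := by
    rw [dist_comm A, dist_comm C]
    exact (pow_left_inj₀ dist_nonneg dist_nonneg two_ne_zero).mp (by linarith)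
  have hu := EuclideanGeometry.inner_vsub_vsub_of_dist_eq_of_dist_eq (c₁ := O)
    (by rwa [dist_comm A, dist_comm B]) hGB'
  have hv := EuclideanGeometry.inner_vsub_vsub_of_dist_eq_of_dist_eq (c₁ := O)
    (by rwa [dist_comm A, dist_comm C]) hGC'
  have hgram : 0 < gram (B - A) (C - A) := by
    have := four_mul_gram_sub_of_equilateral h₁ h₂
    have : 0 < dist A B := dist_pos.mpr hAB
    nlinarith [pow_pos this 4]
  exact (sub_eq_zero.mp (eq_zero_of_inner_eq_zero_of_gram_ne_zero hu hv hgram.ne')).symm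

theorem norm_map_eq_mul_norm_of_centered_triangle {W : Type*} [NormedAddCommGroup W]
    [InnerProductSpace ℝ W] (M : V →ₗ[ℝ] W) {a b c : V} (habc : a + b + c = 0) (ha : ‖a‖ = 1)
    (hb : ‖b‖ = 1) (hc : ‖c‖ = 1) {R : ℝ} (hR : 0 ≤ R) (hMa : ‖M a‖ = R) (hMb : ‖M b‖ = R)
    (hMc : ‖M c‖ = R) (x : V) : ‖M x‖ = R * ‖x‖ := by
  have hab : a + b = -c := eq_neg_of_add_eq_zero_left habc
  have hinner : ⟪a, b⟫ = -1 / 2 := by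
    have := norm_add_sq_real a b
    rw [hab, norm_neg, ha, hb, hc] at this
    linarith
  have hspan : Submodule.span ℝ {a, b} = ⊤ :=
    span_pair_eq_top_of_gram_ne_zero (by rw [gram, ha, hb, hinner]; norm_num)
  have hsq := norm_map_sq_of_span_pair (k := R ^ 2) hspan (by rw [hMa, ha]; ring)
    (by rw [hMb, hb]; ring) (by rw [hab, map_neg, norm_neg, norm_neg, hMc, hc]; ring) x
  rw [← mul_pow] at hsq
  exact (pow_left_inj₀ (norm_nonneg _) (by positivity) two_ne_zero).mp hsq

section InscribedEquilateral

variable {A B C O : V} {R : ℝ} (hAB : A ≠ B) (h₁ : dist A B = dist B C)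
  (h₂ : dist B C = dist C A) (hOA : dist O A = R) (hOB : dist O B = R) (hOC : dist O C = R)
include hAB h₁ h₂ hOA hOB hOC

theorem four_mul_gram_sub_of_circumradius : 4 * gram (B - A) (C - A) = 27 * (R ^ 2) ^ 2 := by
  have hO := eq_centroid_of_equilateral hAB h₁ h₂ (hOA.trans hOB.symm) (hOA.trans hOC.symm)
  have hside : dist A B ^ 2 = 3 * R ^ 2 := by
    rw [← three_mul_dist_centroid_sq_of_equilateral h₁ h₂, ← hO, hOA]
  rw [four_mul_gram_sub_of_equilateral h₁ h₂, show dist A B ^ 4 = (dist A B ^ 2) ^ 2 by ring,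
    hside]
  ring

variable {L : V ≃ᵃ[ℝ] V} (hA : A ∈ L '' closedBall 0 1) (hB : B ∈ L '' closedBall 0 1)
  (hC : C ∈ L '' closedBall 0 1)
include hA hB hC

theorem sq_le_abs_det_of_equilateral_subset :
    R ^ 2 ≤ |LinearMap.det (L.linear : V →ₗ[ℝ] V)| := by
  obtain ⟨a, ha, rfl⟩ := hA
  obtain ⟨b, hb, rfl⟩ := hB
  obtain ⟨c, hc, rfl⟩ := hC
  rw [mem_closedBall_zero_iff] at ha hb hc
  have hbound := four_mul_gram_sub_le ha hb hc
  have hgram := four_mul_gram_sub_of_circumradius hAB h₁ h₂ hOA hOB hOC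
  have hmap := gram_sub_map (L : V →ᵃ[ℝ] V) a b c
  simp only [AffineEquiv.coe_toAffineMap, AffineEquiv.linear_toAffineMap] at hmap
  rw [hmap] at hgram
  have : (R ^ 2) ^ 2 ≤ LinearMap.det (L.linear : V →ₗ[ℝ] V) ^ 2 := by
    nlinarith [sq_nonneg (LinearMap.det (L.linear : V →ₗ[ℝ] V))]
  simpa using sq_le_sq.mp this

theorem image_closedBall_eq_of_abs_det_eq
    (hdet : |LinearMap.det (L.linear : V →ₗ[ℝ] V)| = R ^ 2) :
    L '' closedBall 0 1 = closedBall O R := by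
  have hR := pos_of_dist_eq_of_ne hAB hOA hOB
  have hO := eq_centroid_of_equilateral hAB h₁ h₂ (hOA.trans hOB.symm) (hOA.trans hOC.symm)
  obtain ⟨a, ha, rfl⟩ := hA
  obtain ⟨b, hb, rfl⟩ := hB
  obtain ⟨c, hc, rfl⟩ := hC
  rw [mem_closedBall_zero_iff] at ha hb hc
  set M : V →ₗ[ℝ] V := (L.linear : V →ₗ[ℝ] V)
  have hL : ∀ x, L x = M x + L 0 := (L : V →ᵃ[ℝ] V).apply_eq_linear_add
  have hgram := four_mul_gram_sub_of_circumradius hAB h₁ h₂ hOA hOB hOC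
  have hmap := gram_sub_map (L : V →ᵃ[ℝ] V) a b c
  simp only [AffineEquiv.coe_toAffineMap, AffineEquiv.linear_toAffineMap] at hmap
  rw [hmap, ← sq_abs, hdet] at hgram
  have h27 : 4 * gram (b - a) (c - a) = 27 := by
    have : (R ^ 2) ^ 2 ≠ 0 := by positivity
    apply mul_left_cancel₀ this
    linear_combination hgram
  obtain ⟨habc, ha1, hb1, hc1⟩ := add_add_eq_zero_of_four_mul_gram_sub_eq ha hb hc h27
  have hL0 : L 0 = O := by
    have hsum : L a + L b + L c = M (a + b + c) + (3 : ℝ) • L 0 := by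
      rw [hL a, hL b, hL c, map_add, map_add]; module
    rw [hO, hsum, habc, map_zero M, zero_add, inv_smul_smul₀ three_ne_zero]
  have hM : ∀ x, ‖M x‖ = dist (L x) O := fun x => by
    rw [dist_eq_norm, hL, ← hL0, add_sub_cancel_right]
  refine image_closedBall_eq_of_dist_eq L.toEquiv hR fun x => ?_
  rw [AffineEquiv.coe_toEquiv, ← hM]
  refine norm_map_eq_mul_norm_of_centered_triangle M habc ha1 hb1 hc1 hR.le ?_ ?_ ?_ x <;>
    rwa [hM, dist_comm]

end InscribedEquilateral

end TwoDim

end InnerProductSpace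

theorem isEllipsoid_closedBall (O : EuclideanSpace ℝ (Fin 2)) {R : ℝ} (hR : 0 < R) :
    IsEllipsoid (closedBall O R) := by
  refine ⟨(LinearEquiv.smulOfNeZero ℝ _ R hR.ne').toAffineEquiv.trans
    (AffineEquiv.constVAdd ℝ _ O), (image_closedBall_eq_of_dist_eq _ hR fun x => ?_).symm⟩
  simp [dist_eq_norm, norm_smul, abs_of_pos hR]

theorem stmt_19 (A B C O : EuclideanSpace ℝ (Fin 2)) (R : ℝ)
    (hAB : A ≠ B)
    (heq1 : dist A B = dist B C) (heq2 : dist B C = dist C A)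
    (hOA : dist O A = R) (hOB : dist O B = R) (hOC : dist O C = R)
    (T : Set (EuclideanSpace ℝ (Fin 2)))
    (hT : T = convexHull ℝ {A, B, C}) :
    IsEllipsoid (Metric.closedBall O R) ∧
    T ⊆ Metric.closedBall O R ∧
    (∀ E', IsEllipsoid E' → T ⊆ E' →
      volume (Metric.closedBall O R) ≤ volume E') ∧
    (∀ E', IsEllipsoid E' → T ⊆ E' →
      volume E' = volume (Metric.closedBall O R) → E' = Metric.closedBall O R) := by
  have : Fact (finrank ℝ (EuclideanSpace ℝ (Fin 2)) = 2) := ⟨finrank_euclideanSpace_fin⟩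
  subst hT
  have hR := pos_of_dist_eq_of_ne hAB hOA hOB
  have hvol (L : EuclideanSpace ℝ (Fin 2) ≃ᵃ[ℝ] EuclideanSpace ℝ (Fin 2)) :=
    addHaar_image_affineEquiv volume L (closedBall 0 1)
  have hball : volume (closedBall O R)
      = ENNReal.ofReal (R ^ 2) * volume (closedBall (0 : EuclideanSpace ℝ (Fin 2)) 1) := by
    rw [Measure.addHaar_closedBall' volume O hR.le, finrank_euclideanSpace_fin]
  have hvert {S : Set (EuclideanSpace ℝ (Fin 2))} (hS : convexHull ℝ {A, B, C} ⊆ S) :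
      A ∈ S ∧ B ∈ S ∧ C ∈ S := by
    have := (subset_convexHull ℝ {A, B, C}).trans hS
    exact ⟨this (by simp), this (by simp), this (by simp)⟩
  refine ⟨isEllipsoid_closedBall O hR, convexHull_min ?_ (convex_closedBall O R), ?_, ?_⟩
  · rintro P (rfl | rfl | rfl) <;> simp [mem_closedBall, dist_comm, hOA, hOB, hOC]
  · rintro _ ⟨L, rfl⟩ hTL
    obtain ⟨hA, hB, hC⟩ := hvert hTL
    rw [hball, hvol]
    gcongr
    exact sq_le_abs_det_of_equilateral_subset hAB heq1 heq2 hOA hOB hOC hA hB hC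
  · rintro _ ⟨L, rfl⟩ hTL hvolL
    obtain ⟨hA, hB, hC⟩ := hvert hTL
    refine image_closedBall_eq_of_abs_det_eq hAB heq1 heq2 hOA hOB hOC hA hB hC ?_
    rwa [hvol, hball, ENNReal.mul_left_inj (measure_closedBall_pos volume 0 one_pos).ne'
      measure_closedBall_lt_top.ne, ENNReal.ofReal_eq_ofReal_iff (abs_nonneg _) (sq_nonneg R)]
      at hvolL
end
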